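/- arXiv:2006.06087 — 3 statements merged into one kernel-verified Lean document; each statement's English description precedes it below -/
import Mathlib

section
/- Let β, δ, γ, k, μ̂ be real with β > 0, δ > 0, k ≥ 1, γ > 0. The function φ(ρ) = γβ − μ̂·ρ^(k²) + δ·ρ^(k(1+k)) on (0,∞) attains a strictly positive minimum if and only if μ̂ < μ̂_sn(γ), where μ̂_sn(γ) = ((1+k)δ/k)·(kβγ/δ)^(1/(k+1)); consequently φ has no zeros on (0,∞) for μ̂ < μ̂_sn(γ) (with μ̂ > 0). -/
/-- Saddle-node curve: for `γ > 0` and `μ̂ > 0`, the function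
`φ(ρ) = γβ − μ̂·ρ^(k²) + δ·ρ^(k(1+k))` attains a strictly positive minimum on `(0,∞)`
iff `μ̂ < μ̂_sn(γ) = ((1+k)δ/k)·(kβγ/δ)^(1/(k+1))`; consequently `φ` has no positive
zeros for `μ̂ < μ̂_sn(γ)`. -/
theorem stmt_2 (β δ γ k μhat : ℝ) (hβ : 0 < β) (hδ : 0 < δ) (hγ : 0 < γ) (hk : 1 ≤ k)
    (hμ : 0 < μhat) :
    ((∃ ρc : ℝ, 0 < ρc ∧
        (∀ ρ : ℝ, 0 < ρ →
          γ * β - μhat * ρc ^ (k ^ 2) + δ * ρc ^ (k * (1 + k)) ≤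
            γ * β - μhat * ρ ^ (k ^ 2) + δ * ρ ^ (k * (1 + k))) ∧
        0 < γ * β - μhat * ρc ^ (k ^ 2) + δ * ρc ^ (k * (1 + k))) ↔
      μhat < ((1 + k) * δ / k) * (k * β * γ / δ) ^ ((1 : ℝ) / (k + 1))) ∧
    (μhat < ((1 + k) * δ / k) * (k * β * γ / δ) ^ ((1 : ℝ) / (k + 1)) →
      ∀ ρ : ℝ, 0 < ρ → γ * β - μhat * ρ ^ (k ^ 2) + δ * ρ ^ (k * (1 + k)) ≠ 0) := by
  have k0 : (0:ℝ) < k := lt_of_lt_of_le one_pos hk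
  have hk1 : (0:ℝ) < 1 + k := by linarith
  set d : ℝ := (1 + k) * δ / k with hd
  have hd0 : 0 < d := by positivity
  have hdk : d * k = (1 + k) * δ := by rw [hd]; field_simp
  set a : ℝ := μhat / d with hadef
  have ha0 : 0 < a := by positivity
  have haK : a ^ k = μhat ^ k / d ^ k := Real.div_rpow hμ.le hd0.le k
  set C : ℝ := μhat ^ k * μhat / (d ^ k * (1 + k)) with hC
  have hμK : μhat ^ (k + 1) = μhat ^ k * μhat := by
    rw [Real.rpow_add hμ, Real.rpow_one]
  have hdk0 : (0:ℝ) < d ^ k := Real.rpow_pos_of_pos hd0 k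
  have hM0 : 0 < d * (k * β * γ / δ) ^ ((1 : ℝ) / (k + 1)) := by
    have : (0:ℝ) < (k * β * γ / δ) ^ ((1 : ℝ) / (k + 1)) :=
      Real.rpow_pos_of_pos (by positivity) _
    positivity
  -- conjugate exponents
  have hpq : Real.HolderConjugate ((k + 1) / k) (k + 1) := by
    rw [Real.holderConjugate_iff]
    constructor
    · rw [lt_div_iff₀ k0]; linarith
    · rw [inv_div]; field_simp
  -- lower bound
  have hlb : ∀ ρ : ℝ, 0 < ρ →
      γ * β - C ≤ γ * β - μhat * ρ ^ (k ^ 2) + δ * ρ ^ (k * (1 + k)) := by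
    intro ρ hρ
    set u : ℝ := ρ ^ (k ^ 2) with hu
    have hu0 : 0 < u := Real.rpow_pos_of_pos hρ _
    have hup : u ^ ((k + 1) / k) = ρ ^ (k * (1 + k)) := by
      rw [hu, ← Real.rpow_mul hρ.le]
      congr 1
      field_simp
      ring
    set c : ℝ := d ^ (k / (k + 1)) with hcdef
    have hc0 : 0 < c := Real.rpow_pos_of_pos hd0 _
    have hY := Real.young_inequality_of_nonneg (mul_nonneg hc0.le hu0.le)
      (div_nonneg hμ.le hc0.le) hpq
    have h1 : c * u * (μhat / c) = μhat * u := by field_simp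
    have h2 : (c * u) ^ ((k + 1) / k) = d * u ^ ((k + 1) / k) := by
      rw [Real.mul_rpow hc0.le hu0.le, hcdef, ← Real.rpow_mul hd0.le]
      congr 2
      field_simp
      exact Real.rpow_one d
    have h3 : (μhat / c) ^ (k + 1) = μhat ^ (k + 1) / d ^ k := by
      rw [Real.div_rpow hμ.le hc0.le, hcdef, ← Real.rpow_mul hd0.le]
      congr 2
      field_simp
    rw [h1, h2, h3, hμK] at hY
    have hfin : μhat * u ≤ δ * u ^ ((k + 1) / k) + C := by
      have e1 : d * u ^ ((k + 1) / k) / ((k + 1) / k) = δ * u ^ ((k + 1) / k) := by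
        rw [hd]; field_simp; ring
      have e2 : μhat ^ k * μhat / d ^ k / (k + 1) = C := by
        rw [hC, div_div]
        ring_nf
      rw [e1, e2] at hY
      exact hY
    rw [← hup]
    linarith
  -- value at the critical point
  set ρc : ℝ := a ^ ((1:ℝ) / k) with hρc
  have hρc0 : 0 < ρc := Real.rpow_pos_of_pos ha0 _
  have hρck2 : ρc ^ (k ^ 2) = a ^ k := by
    rw [hρc, ← Real.rpow_mul ha0.le]
    congr 1
    field_simp
  have hρckk : ρc ^ (k * (1 + k)) = a * a ^ k := by
    rw [hρc, ← Real.rpow_mul ha0.le]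
    have : (1:ℝ) / k * (k * (1 + k)) = 1 + k := by field_simp
    rw [this, Real.rpow_add ha0, Real.rpow_one]
  have hδa : δ * a = k * μhat / (1 + k) := by
    rw [hadef, hd]
    field_simp
  have hval : γ * β - μhat * ρc ^ (k ^ 2) + δ * ρc ^ (k * (1 + k)) = γ * β - C := by
    rw [hρck2, hρckk, haK, hC, ← mul_assoc, hδa]
    field_simp
    ring
  -- equivalence C < γβ ↔ μhat < M
  have hMk : (d * (k * β * γ / δ) ^ ((1 : ℝ) / (k + 1))) ^ (k + 1)
      = d ^ k * ((1 + k) * β * γ) := by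
    rw [Real.mul_rpow hd0.le (Real.rpow_pos_of_pos (by positivity) _).le,
      ← Real.rpow_mul (by positivity : (0:ℝ) ≤ k * β * γ / δ)]
    have h4 : (1:ℝ) / (k + 1) * (k + 1) = 1 := by field_simp
    rw [h4, Real.rpow_one, Real.rpow_add hd0, Real.rpow_one]
    have h5 : d * (k * β * γ / δ) = (1 + k) * β * γ := by
      rw [hd]; field_simp
    rw [mul_assoc, h5]
  have hiff : C < γ * β ↔ μhat < d * (k * β * γ / δ) ^ ((1 : ℝ) / (k + 1)) := by
    rw [← Real.rpow_lt_rpow_iff hμ.le hM0.le (show (0:ℝ) < k + 1 by linarith), hμK, hMk,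
      hC, div_lt_iff₀ (by positivity)]
    constructor <;> intro h <;> nlinarith [hdk0, hβ, hγ, hk1]
  have hMeq : ((1 + k) * δ / k) * (k * β * γ / δ) ^ ((1 : ℝ) / (k + 1))
      = d * (k * β * γ / δ) ^ ((1 : ℝ) / (k + 1)) := by rw [hd]
  constructor
  · constructor
    · rintro ⟨ρ₀, hρ₀, hmin, hpos⟩
      have h6 := hmin ρc hρc0
      rw [hval] at h6
      rw [hMeq]
      exact hiff.mp (by linarith)
    · intro hμM
      rw [hMeq] at hμM
      have hCβ := hiff.mpr hμM
      exact ⟨ρc, hρc0, fun ρ hρ => by rw [hval]; exact hlb ρ hρ, by rw [hval]; linarith⟩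
  · intro hμM ρ hρ h0
    rw [hMeq] at hμM
    have hCβ := hiff.mpr hμM
    have h7 := hlb ρ hρ
    linarith
end

section
/- Consider the planar system x₁' = ρ₁^(k(1+k))·((τ−γ)β + μ̂·ρ₁^(k²) + τ·x₁ − δ·ρ₁^(k(1+k))) + k·x₁·(β + x₁), ρ₁' = (1/k)·ρ₁·(β + x₁), with β > 0, τ > 0, δ > 0, k ≥ 1. If an equilibrium has x₁ = −β and trace of the Jacobian equal to zero, then ρ₁ = (kβ/τ)^(1/(k(1+k))), and substituting into the equilibrium equation yields μ̂ = ((kδ + τγ)/k)·(kβ/τ)^(1/(k+1)). -/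
lemma aux_root (a b : ℝ) (n : ℕ) (ha : 0 < a) (hn : 0 < n) (h : a ^ n = b) :
    a = b ^ ((1 : ℝ) / (n : ℝ)) := by
  subst h
  rw [← Real.rpow_natCast a n, ← Real.rpow_mul ha.le]
  rw [mul_one_div, div_self (by positivity), Real.rpow_one]

/-- If an equilibrium of the desingularised system has `x₁ = −β` and zero Jacobian trace,
then `ρ₁ = (kβ/τ)^(1/(k(1+k)))` and `μ̂ = ((kδ + τγ)/k)·(kβ/τ)^(1/(k+1))` (the Hopf value). -/
theorem stmt_4 (k : ℕ) (hk : 1 ≤ k) (β τ δ γ μhat ρ : ℝ)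
    (hβ : 0 < β) (hτ : 0 < τ) (hδ : 0 < δ) (hρ : 0 < ρ)
    (heq : ρ ^ (k * (1 + k)) *
        ((τ - γ) * β + μhat * ρ ^ (k ^ 2) + τ * (-β) - δ * ρ ^ (k * (1 + k)))
        + (k : ℝ) * (-β) * (β + -β) = 0)
    (htr : -((k : ℝ) * β) + τ * ρ ^ (k * (1 + k)) = 0) :
    ρ = ((k : ℝ) * β / τ) ^ ((1 : ℝ) / ((k : ℝ) * (1 + (k : ℝ)))) ∧
      μhat = (((k : ℝ) * δ + τ * γ) / (k : ℝ)) * ((k : ℝ) * β / τ) ^ ((1 : ℝ) / ((k : ℝ) + 1)) := by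
  have hk0 : (0 : ℝ) < (k : ℝ) := by exact_mod_cast hk.trans_lt' (by norm_num)
  have hpow : ρ ^ (k * (1 + k)) = (k : ℝ) * β / τ := by
    field_simp at htr ⊢
    linarith
  have hn : 0 < k * (1 + k) := by positivity
  have h1 : ρ = ((k : ℝ) * β / τ) ^ ((1 : ℝ) / ((k : ℝ) * (1 + (k : ℝ)))) := by
    have := aux_root ρ ((k : ℝ) * β / τ) (k * (1 + k)) hρ hn hpow
    rwa [show ((k * (1 + k) : ℕ) : ℝ) = (k : ℝ) * (1 + (k : ℝ)) by push_cast; ring] at this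
  refine ⟨h1, ?_⟩
  -- ρ^k as root
  have hpk : (ρ ^ k) ^ (1 + k) = (k : ℝ) * β / τ := by
    rw [← pow_mul]; exact hpow
  have h2 : ρ ^ k = ((k : ℝ) * β / τ) ^ ((1 : ℝ) / ((k : ℝ) + 1)) := by
    have := aux_root (ρ ^ k) ((k : ℝ) * β / τ) (1 + k) (by positivity) (by omega) hpk
    rwa [show ((1 + k : ℕ) : ℝ) = (k : ℝ) + 1 by push_cast; ring] at this
  -- bracket = 0
  have hbr : (τ - γ) * β + μhat * ρ ^ (k ^ 2) + τ * (-β) - δ * ρ ^ (k * (1 + k)) = 0 := by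
    have hne : ρ ^ (k * (1 + k)) ≠ 0 := by positivity
    have : ρ ^ (k * (1 + k)) * ((τ - γ) * β + μhat * ρ ^ (k ^ 2) + τ * (-β) - δ * ρ ^ (k * (1 + k))) = 0 := by
      linarith [heq]
    exact (mul_eq_zero.mp this).resolve_left hne
  have hsplit : ρ ^ (k * (1 + k)) = ρ ^ (k ^ 2) * ρ ^ k := by
    rw [← pow_add]; ring_nf
  have hμ : μhat * ρ ^ (k ^ 2) = γ * β + δ * ((k : ℝ) * β / τ) := by
    rw [hpow] at hbr; linarith
  -- ρ^(k^2) = (kβ/τ) / ρ^k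
  have hρk : (0:ℝ) < ρ ^ k := by positivity
  have hk2 : ρ ^ (k ^ 2) = ((k : ℝ) * β / τ) / ρ ^ k := by
    rw [eq_div_iff hρk.ne', ← hsplit, hpow]
  rw [hk2] at hμ
  rw [← h2]
  have hc : (0:ℝ) < (k : ℝ) * β / τ := by positivity
  field_simp at hμ ⊢
  apply mul_right_cancel₀ (show (β * τ) ≠ 0 by positivity)
  linear_combination (β * τ) * hμ
end

section
/- With β > 0, τ > 0, δ > 0, k ≥ 1 and γ < δ/τ, the determinant of the Jacobian of the desingularised system at the Hopf equilibrium (x₁, ρ₁) = (−β, (kβ/τ)^(1/(k(1+k)))) with μ̂ = μ̂_ah(γ) equals (kβ/τ)²·(δ − γτ), which is strictly positive. -/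
/-- The Jacobian determinant of the desingularised system at the Hopf equilibrium
`(x₁,ρ₁) = (−β, (kβ/τ)^(1/(k(1+k))))` with `μ̂ = μ̂_ah(γ)` equals
`(kβ/τ)²·(δ − γτ) > 0` whenever `γ < δ/τ`. -/
theorem stmt_5 (k : ℕ) (hk : 1 ≤ k) (β τ δ γ : ℝ)
    (hβ : 0 < β) (hτ : 0 < τ) (hδ : 0 < δ) (hγ : γ < δ / τ)
    (μah ρh : ℝ)
    (hμah : μah = (((k : ℝ) * δ + τ * γ) / (k : ℝ)) * ((k : ℝ) * β / τ) ^ ((1 : ℝ) / ((k : ℝ) + 1)))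
    (hρh : ρh = ((k : ℝ) * β / τ) ^ ((1 : ℝ) / ((k : ℝ) * (1 + (k : ℝ)))))
    (f1 f2 : ℝ → ℝ → ℝ)
    (hf1 : f1 = fun x r =>
      r ^ (k * (1 + k)) * ((τ - γ) * β + μah * r ^ (k ^ 2) + τ * x - δ * r ^ (k * (1 + k)))
        + (k : ℝ) * x * (β + x))
    (hf2 : f2 = fun x r => (1 / (k : ℝ)) * r * (β + x)) :
    deriv (fun x => f1 x ρh) (-β) * deriv (fun r => f2 (-β) r) ρh
        - deriv (fun r => f1 (-β) r) ρh * deriv (fun x => f2 x ρh) (-β)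
      = ((k : ℝ) * β / τ) ^ 2 * (δ - γ * τ) ∧
    0 < ((k : ℝ) * β / τ) ^ 2 * (δ - γ * τ) := by
  have hkR : (0:ℝ) < (k:ℝ) := by exact_mod_cast Nat.lt_of_lt_of_le Nat.zero_lt_one hk
  have hkR0 : (k:ℝ) ≠ 0 := ne_of_gt hkR
  have hk1 : (0:ℝ) < 1 + (k:ℝ) := by linarith
  have hc : (0:ℝ) < (k:ℝ) * β / τ := div_pos (mul_pos hkR hβ) hτ
  have hτ0 : τ ≠ 0 := ne_of_gt hτ
  have hpos : 0 < ((k:ℝ) * β / τ) ^ 2 * (δ - γ * τ) := by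
    have hlt : γ * τ < δ := (lt_div_iff₀ hτ).mp hγ
    exact mul_pos (pow_pos hc 2) (by linarith)
  refine ⟨?_, hpos⟩
  -- key power identities
  have e1 : ρh ^ (k * (1 + k)) = ((k:ℝ) * β / τ) := by
    rw [hρh, ← Real.rpow_natCast (((k:ℝ) * β / τ) ^ ((1:ℝ) / ((k:ℝ) * (1 + (k:ℝ))))) (k * (1 + k)),
      ← Real.rpow_mul hc.le]
    rw [show (1:ℝ) / ((k:ℝ) * (1 + (k:ℝ))) * ((k * (1+k) : ℕ) : ℝ) = 1 by
      push_cast; field_simp]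
    exact Real.rpow_one ((k:ℝ) * β / τ)
  have e2 : ρh ^ (k ^ 2) = ((k:ℝ) * β / τ) ^ ((k:ℝ) / ((k:ℝ) + 1)) := by
    rw [hρh, ← Real.rpow_natCast (((k:ℝ) * β / τ) ^ ((1:ℝ) / ((k:ℝ) * (1 + (k:ℝ))))) (k ^ 2),
      ← Real.rpow_mul hc.le]
    congr 1
    push_cast
    field_simp
    ring
  have e2' : μah * ρh ^ (k ^ 2) = (((k:ℝ) * δ + τ * γ) / (k:ℝ)) * ((k:ℝ) * β / τ) := by
    rw [hμah, e2, mul_assoc, ← Real.rpow_add hc]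
    rw [show (1:ℝ) / ((k:ℝ) + 1) + (k:ℝ) / ((k:ℝ) + 1) = 1 by field_simp; ring]
    rw [Real.rpow_one]
  have hρ : 0 < ρh := hρh ▸ Real.rpow_pos_of_pos hc _
  have hN : 1 ≤ k * (1 + k) := Nat.one_le_iff_ne_zero.mpr (by positivity)
  have hK : 1 ≤ k ^ 2 := Nat.one_le_iff_ne_zero.mpr (by positivity)
  have e3 : ρh * ρh ^ (k * (1 + k) - 1) = ((k:ℝ) * β / τ) := by
    rw [← pow_succ', Nat.sub_add_cancel hN, e1]
  have e4 : μah * (ρh * ρh ^ (k ^ 2 - 1)) = (((k:ℝ) * δ + τ * γ) / (k:ℝ)) * ((k:ℝ) * β / τ) := by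
    rw [← pow_succ', Nat.sub_add_cancel hK, e2']
  simp only [hf1, hf2]
  -- derivatives
  have h1 : HasDerivAt (fun x : ℝ =>
      ρh ^ (k * (1 + k)) * ((τ - γ) * β + μah * ρh ^ (k ^ 2) + τ * x - δ * ρh ^ (k * (1 + k)))
        + (k : ℝ) * x * (β + x))
      (ρh ^ (k * (1 + k)) * (τ * 1) + ((↑k * 1) * (β + (-β)) + (↑k * (-β)) * 1)) (-β) := by
    have hx : HasDerivAt (fun x : ℝ => x) 1 (-β) := hasDerivAt_id _
    exact ((((hx.const_mul τ).const_add ((τ - γ) * β + μah * ρh ^ (k ^ 2))).sub_const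
        (δ * ρh ^ (k * (1 + k)))).const_mul (ρh ^ (k * (1 + k)))).add
      ((hx.const_mul (k:ℝ)).mul (hx.const_add β))
  have h2 : HasDerivAt (fun r : ℝ => 1 / (k:ℝ) * r * (β + (-β)))
      ((1 / (k:ℝ) * 1) * (β + (-β))) ρh :=
    ((hasDerivAt_id ρh).const_mul (1 / (k:ℝ))).mul_const (β + (-β))
  have h3 : HasDerivAt (fun r : ℝ =>
      r ^ (k * (1 + k)) * ((τ - γ) * β + μah * r ^ (k ^ 2) + τ * (-β) - δ * r ^ (k * (1 + k)))
        + (k : ℝ) * (-β) * (β + (-β)))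
      ((↑(k * (1 + k)) * ρh ^ (k * (1 + k) - 1)) *
          ((τ - γ) * β + μah * ρh ^ (k ^ 2) + τ * (-β) - δ * ρh ^ (k * (1 + k)))
        + ρh ^ (k * (1 + k)) *
          (μah * (↑(k ^ 2) * ρh ^ (k ^ 2 - 1)) - δ * (↑(k * (1 + k)) * ρh ^ (k * (1 + k) - 1))))
      ρh := by
    exact ((hasDerivAt_pow (k * (1 + k)) ρh).mul
      ((((hasDerivAt_pow (k ^ 2) ρh).const_mul μah).const_add ((τ - γ) * β)).add_const
          (τ * (-β)) |>.sub ((hasDerivAt_pow (k * (1 + k)) ρh).const_mul δ))).add_const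
      ((k : ℝ) * (-β) * (β + (-β)))
  have h4 : HasDerivAt (fun x : ℝ => 1 / (k:ℝ) * ρh * (β + x)) ((1 / (k:ℝ) * ρh) * 1) (-β) :=
    ((hasDerivAt_id (-β)).const_add β).const_mul (1 / (k:ℝ) * ρh)
  rw [h1.deriv, h2.deriv, h3.deriv, h4.deriv]
  push_cast
  rw [e1, e2']
  linear_combination (norm := (field_simp [hτ0, hkR0]; ring))
    (-(1 / (k:ℝ)) * ((k:ℝ) * (1 + (k:ℝ)) *
        ((τ - γ) * β + (((k:ℝ) * δ + τ * γ) / (k:ℝ)) * ((k:ℝ) * β / τ) + τ * (-β) - δ * ((k:ℝ) * β / τ))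
      - δ * ((k:ℝ) * β / τ) * ((k:ℝ) * (1 + (k:ℝ))))) * e3
    + (-(1 / (k:ℝ)) * ((k:ℝ) * β / τ) * (k:ℝ) ^ 2) * e4
end
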